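/- Suppose there exists a real ε ∈ [0, 1/2) such that for all y ∈ 𝒴 and all x ∈ 𝒳 one has |π_X^y(x)/π_X(x) − 1| ≤ ε. Then for every function f : 𝒳 × 𝒴 → ℝ, Var f ≤ (1 + ε/(1−2ε)) · (E[Var_X f] + E[Var_Y f]). -/

import Mathlib

open scoped BigOperators Classical

noncomputable section

/-- Expectation of `f` under the (finitely supported) density `p`. -/
def pmean {α : Type*} [Fintype α] (p f : α → ℝ) : ℝ := ∑ a, p a * f a

/-- Variance of `f` under the density `p`. -/
def pvar {α : Type*} [Fintype α] (p f : α → ℝ) : ℝ :=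
  pmean p (fun a => (f a - pmean p f) ^ 2)

/-- Marginal on the first coordinate. -/
def margX {X Y : Type*} [Fintype X] [Fintype Y] (π : X × Y → ℝ) : X → ℝ :=
  fun x => ∑ y, π (x, y)

/-- Marginal on the second coordinate. -/
def margY {X Y : Type*} [Fintype X] [Fintype Y] (π : X × Y → ℝ) : Y → ℝ :=
  fun y => ∑ x, π (x, y)

/-- Conditional distribution of the first coordinate given the second equals `y`. -/
def condX {X Y : Type*} [Fintype X] [Fintype Y] (π : X × Y → ℝ) (y : Y) : X → ℝ :=
  fun x => π (x, y) / margY π y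

/-- Conditional distribution of the second coordinate given the first equals `x`. -/
def condY {X Y : Type*} [Fintype X] [Fintype Y] (π : X × Y → ℝ) (x : X) : Y → ℝ :=
  fun y => π (x, y) / margX π x

lemma pmean_sub_const {α : Type*} [Fintype α] (p f : α → ℝ) (c : ℝ)
    (hp : ∑ a, p a = 1) : pmean p (fun a => f a - c) = pmean p f - c := by
  simp only [pmean, mul_sub, Finset.sum_sub_distrib, ← Finset.sum_mul, hp, one_mul]

lemma pvar_sub_const {α : Type*} [Fintype α] (p f : α → ℝ) (c : ℝ)
    (hp : ∑ a, p a = 1) : pvar p (fun a => f a - c) = pvar p f := by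
  unfold pvar
  rw [pmean_sub_const p f c hp]
  congr 1
  funext a
  ring

lemma pvar_nonneg {α : Type*} [Fintype α] (p f : α → ℝ) (hp : ∀ a, 0 ≤ p a) :
    0 ≤ pvar p f :=
  Finset.sum_nonneg fun a _ => mul_nonneg (hp a) (sq_nonneg _)

lemma pvar_eq {α : Type*} [Fintype α] (p f : α → ℝ) (hp : ∑ a, p a = 1) :
    pvar p f = (∑ a, p a * f a ^ 2) - (pmean p f) ^ 2 := by
  unfold pvar pmean
  have h : ∀ a ∈ Finset.univ, p a * (f a - ∑ b, p b * f b) ^ 2 =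
      p a * f a ^ 2 - 2 * (∑ b, p b * f b) * (p a * f a) + (∑ b, p b * f b) ^ 2 * p a :=
    fun a _ => by ring
  rw [Finset.sum_congr rfl h, Finset.sum_add_distrib, Finset.sum_sub_distrib,
    ← Finset.mul_sum, ← Finset.mul_sum, hp]
  ring

/-- Weighted Cauchy–Schwarz. -/
lemma weighted_cs {α : Type*} [Fintype α] (p u v : α → ℝ) (hp : ∀ a, 0 ≤ p a) :
    (∑ a, p a * (u a * v a)) ^ 2 ≤ (∑ a, p a * u a ^ 2) * (∑ a, p a * v a ^ 2) := by
  have h1 : ∀ a, p a * (u a * v a) =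
      (Real.sqrt (p a) * u a) * (Real.sqrt (p a) * v a) := by
    intro a
    rw [show (Real.sqrt (p a) * u a) * (Real.sqrt (p a) * v a)
        = (Real.sqrt (p a) * Real.sqrt (p a)) * (u a * v a) by ring,
      Real.mul_self_sqrt (hp a)]
  have h2 : ∀ a, p a * u a ^ 2 = (Real.sqrt (p a) * u a) ^ 2 := by
    intro a
    rw [mul_pow, Real.sq_sqrt (hp a)]
  have h3 : ∀ a, p a * v a ^ 2 = (Real.sqrt (p a) * v a) ^ 2 := by
    intro a
    rw [mul_pow, Real.sq_sqrt (hp a)]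
  simp only [h1, h2, h3]
  exact Finset.sum_mul_sq_le_sq_mul_sq _ _ _

lemma helper_SV (S V ε C : ℝ) (hS : 0 ≤ S) (hV : 0 ≤ V) (hε : 0 ≤ ε)
    (h1 : S ^ 2 ≤ (S + 2 * C) * V) (h2 : 2 * C ≤ ε * S) : S ≤ (1 + ε) * V := by
  rcases eq_or_lt_of_le hS with h | h
  · nlinarith
  · nlinarith [mul_le_mul_of_nonneg_right h2 hV]

lemma helper_final (V S ε : ℝ) (hV : 0 ≤ V) (hS : S ≤ (1 + ε) * V)
    (hε0 : 0 ≤ ε) (hε1 : ε < 1 / 2) :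
    V ≤ (1 + ε / (1 - 2 * ε)) * (2 * V - S) := by
  have h2ε : 0 < 1 - 2 * ε := by linarith
  have hc : 1 + ε / (1 - 2 * ε) = (1 - ε) / (1 - 2 * ε) := by
    rw [eq_div_iff h2ε.ne', add_mul, div_mul_cancel₀ _ h2ε.ne']
    ring
  rw [hc, div_mul_eq_mul_div, le_div_iff₀ h2ε]
  nlinarith [mul_le_mul_of_nonneg_left hS (by linarith : (0:ℝ) ≤ 1 - ε),
    mul_nonneg hV (sq_nonneg ε)]

/-- **Two-variable factorization of variance with weak correlation.**
If `|π_X^y(x)/π_X(x) - 1| ≤ ε` for all `x, y` with `0 ≤ ε < 1/2`, then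
`Var f ≤ (1 + ε/(1-2ε)) (E[Var_X f] + E[Var_Y f])`. -/
theorem var_factorization_weak_correlation
    {X Y : Type*} [Fintype X] [Fintype Y] [Nonempty X] [Nonempty Y]
    (π : X × Y → ℝ) (hnn : ∀ z, 0 ≤ π z) (hsum : ∑ z, π z = 1)
    (hX : ∀ x, 0 < margX π x) (hY : ∀ y, 0 < margY π y)
    (ε : ℝ) (hε0 : 0 ≤ ε) (hε1 : ε < 1 / 2)
    (hcorr : ∀ y x, |condX π y x / margX π x - 1| ≤ ε)
    (f : X × Y → ℝ) :
    pvar π f ≤ (1 + ε / (1 - 2 * ε)) *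
      ((∑ y, margY π y * pvar (condX π y) (fun x => f (x, y))) +
       (∑ x, margX π x * pvar (condY π x) (fun y => f (x, y)))) := by
  classical
  -- centered function
  set m : ℝ := pmean π f with hm
  set F : X × Y → ℝ := fun z => f z - m with hFdef
  -- basic facts
  have hPXY : ∀ x y, margY π y * condX π y x = π (x, y) := by
    intro x y
    have h := (hY y).ne'
    unfold condX
    field_simp
  have hPXY' : ∀ x y, margX π x * condY π x y = π (x, y) := by
    intro x y
    have h := (hX x).ne'
    unfold condY
    field_simp
  have hcond1X : ∀ y, ∑ x, condX π y x = 1 := by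
    intro y
    simp only [condX]
    rw [← Finset.sum_div]
    exact div_self (hY y).ne'
  have hcond1Y : ∀ x, ∑ y, condY π x y = 1 := by
    intro x
    simp only [condY]
    rw [← Finset.sum_div]
    exact div_self (hX x).ne'
  have hsumXY : ∑ x, ∑ y, π (x, y) = 1 := by
    rw [← Fintype.sum_prod_type]; exact hsum
  have hsumYX : ∑ y, ∑ x, π (x, y) = 1 := by
    rw [← Fintype.sum_prod_type_right]; exact hsum
  have hF0 : ∑ z, π z * F z = 0 := by
    simp only [hFdef, mul_sub, Finset.sum_sub_distrib, ← Finset.sum_mul, hsum, one_mul]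
    simp [hm, pmean]
  -- conditional means
  set g : Y → ℝ := fun y => ∑ x, condX π y x * F (x, y) with hgdef
  set h : X → ℝ := fun x => ∑ y, condY π x y * F (x, y) with hhdef
  have hgy : ∀ y, ∑ x, π (x, y) * F (x, y) = margY π y * g y := by
    intro y
    rw [hgdef]
    simp only
    rw [Finset.mul_sum]
    refine Finset.sum_congr rfl fun x _ => ?_
    rw [← mul_assoc, hPXY]
  have hhx : ∀ x, ∑ y, π (x, y) * F (x, y) = margX π x * h x := by
    intro x
    rw [hhdef]
    simp only
    rw [Finset.mul_sum]
    refine Finset.sum_congr rfl fun y _ => ?_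
    rw [← mul_assoc, hPXY']
  -- second moments
  set V : ℝ := ∑ z, π z * F z ^ 2 with hVdef
  set G : ℝ := ∑ y, margY π y * g y ^ 2 with hGdef
  set H : ℝ := ∑ x, margX π x * h x ^ 2 with hHdef
  clear_value V G H
  have hV0 : 0 ≤ V := by
    rw [hVdef]; exact Finset.sum_nonneg fun z _ => mul_nonneg (hnn z) (sq_nonneg _)
  have hG0 : 0 ≤ G := by
    rw [hGdef]; exact Finset.sum_nonneg fun y _ => mul_nonneg (hY y).le (sq_nonneg _)
  have hH0 : 0 ≤ H := by
    rw [hHdef]; exact Finset.sum_nonneg fun x _ => mul_nonneg (hX x).le (sq_nonneg _)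
  -- centered sums vanish
  have hFsplitY : ∑ z : X × Y, π z * F z = ∑ y, ∑ x, π (x, y) * F (x, y) :=
    Fintype.sum_prod_type_right _
  have hFsplitX : ∑ z : X × Y, π z * F z = ∑ x, ∑ y, π (x, y) * F (x, y) :=
    Fintype.sum_prod_type _
  have hg0 : ∑ y, margY π y * g y = 0 := by
    have e1 : ∑ y, margY π y * g y = ∑ y, ∑ x, π (x, y) * F (x, y) :=
      Finset.sum_congr rfl fun y _ => (hgy y).symm
    rw [e1, ← hFsplitY]; exact hF0
  have hh0 : ∑ x, margX π x * h x = 0 := by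
    have e1 : ∑ x, margX π x * h x = ∑ x, ∑ y, π (x, y) * F (x, y) :=
      Finset.sum_congr rfl fun x _ => (hhx x).symm
    rw [e1, ← hFsplitX]; exact hF0
  -- variance decompositions
  have hA : (∑ y, margY π y * pvar (condX π y) (fun x => F (x, y))) = V - G := by
    have step : ∀ y, margY π y * pvar (condX π y) (fun x => F (x, y)) =
        (∑ x, π (x, y) * F (x, y) ^ 2) - margY π y * g y ^ 2 := by
      intro y
      rw [pvar_eq _ _ (hcond1X y)]
      have hpm : pmean (condX π y) (fun x => F (x, y)) = g y := by
        simp only [hgdef, pmean]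
      rw [hpm, mul_sub, Finset.mul_sum]
      congr 1
      refine Finset.sum_congr rfl fun x _ => ?_
      rw [← mul_assoc, hPXY]
    rw [Finset.sum_congr rfl fun y _ => step y, Finset.sum_sub_distrib, ← hGdef]
    congr 1
    rw [hVdef, Fintype.sum_prod_type_right]
  have hB : (∑ x, margX π x * pvar (condY π x) (fun y => F (x, y))) = V - H := by
    have step : ∀ x, margX π x * pvar (condY π x) (fun y => F (x, y)) =
        (∑ y, π (x, y) * F (x, y) ^ 2) - margX π x * h x ^ 2 := by
      intro x
      rw [pvar_eq _ _ (hcond1Y x)]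
      have hpm : pmean (condY π x) (fun y => F (x, y)) = h x := by
        simp only [hhdef, pmean]
      rw [hpm, mul_sub, Finset.mul_sum]
      congr 1
      refine Finset.sum_congr rfl fun y _ => ?_
      rw [← mul_assoc, hPXY']
    rw [Finset.sum_congr rfl fun x _ => step x, Finset.sum_sub_distrib, ← hHdef]
    congr 1
    rw [hVdef, Fintype.sum_prod_type]
  -- E[(g+h) F] = G + H
  have hGHS : ∑ z, π z * ((g z.2 + h z.1) * F z) = G + H := by
    have split : ∀ z : X × Y, π z * ((g z.2 + h z.1) * F z) =
        π z * (g z.2 * F z) + π z * (h z.1 * F z) := fun z => by ring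
    rw [Finset.sum_congr rfl fun z _ => split z, Finset.sum_add_distrib]
    congr 1
    · rw [Fintype.sum_prod_type_right, hGdef]
      refine Finset.sum_congr rfl fun y _ => ?_
      have : ∑ x, π (x, y) * (g y * F (x, y)) = g y * ∑ x, π (x, y) * F (x, y) := by
        rw [Finset.mul_sum]
        exact Finset.sum_congr rfl fun x _ => by ring
      rw [this, hgy y]
      ring
    · rw [Fintype.sum_prod_type, hHdef]
      refine Finset.sum_congr rfl fun x _ => ?_
      have : ∑ y, π (x, y) * (h x * F (x, y)) = h x * ∑ y, π (x, y) * F (x, y) := by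
        rw [Finset.mul_sum]
        exact Finset.sum_congr rfl fun y _ => by ring
      rw [this, hhx x]
      ring
  -- E[(g+h)^2] = G + H + 2 C
  set C : ℝ := ∑ z, π z * (h z.1 * g z.2) with hCdef
  clear_value C
  have hsq : ∑ z, π z * (g z.2 + h z.1) ^ 2 = G + H + 2 * C := by
    have split : ∀ z : X × Y, π z * (g z.2 + h z.1) ^ 2 =
        π z * g z.2 ^ 2 + π z * h z.1 ^ 2 + 2 * (π z * (h z.1 * g z.2)) := fun z => by ring
    rw [Finset.sum_congr rfl fun z _ => split z, Finset.sum_add_distrib,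
      Finset.sum_add_distrib, ← Finset.mul_sum, ← hCdef]
    congr 2
    · rw [Fintype.sum_prod_type_right, hGdef]
      refine Finset.sum_congr rfl fun y _ => ?_
      rw [show margY π y * g y ^ 2 = ∑ x, π (x, y) * g y ^ 2 from by
        simp only [margY]; rw [Finset.sum_mul]]
    · rw [Fintype.sum_prod_type, hHdef]
      refine Finset.sum_congr rfl fun x _ => ?_
      rw [show margX π x * h x ^ 2 = ∑ y, π (x, y) * h x ^ 2 from by
        simp only [margX]; rw [Finset.sum_mul]]
  -- bound the cross term : 2 C ≤ ε (G + H)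
  have hpprod : ∀ x y, |π (x, y) - margX π x * margY π y| ≤ ε * (margX π x * margY π y) := by
    intro x y
    have h1 := hcorr y x
    have hx := hX x
    have hy := hY y
    have hk : condX π y x / margX π x - 1 =
        (π (x, y) - margX π x * margY π y) / (margX π x * margY π y) := by
      unfold condX
      field_simp
    rw [hk, abs_div, abs_of_pos (mul_pos hx hy), div_le_iff₀ (mul_pos hx hy)] at h1
    linarith [h1]
  have habsh : (∑ x, margX π x * |h x|) ^ 2 ≤ H := by
    have := weighted_cs (margX π) (fun x => |h x|) (fun _ => 1) (fun x => (hX x).le)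
    simp only [mul_one, one_pow, sq_abs] at this
    calc (∑ x, margX π x * |h x|) ^ 2
        ≤ (∑ x, margX π x * h x ^ 2) * (∑ x, margX π x) := this
      _ = H := by
          rw [show ∑ x, margX π x = 1 from by
            simpa only [margX] using hsumXY]
          rw [mul_one, hHdef]
  have habsg : (∑ y, margY π y * |g y|) ^ 2 ≤ G := by
    have := weighted_cs (margY π) (fun y => |g y|) (fun _ => 1) (fun y => (hY y).le)
    simp only [mul_one, one_pow, sq_abs] at this
    calc (∑ y, margY π y * |g y|) ^ 2
        ≤ (∑ y, margY π y * g y ^ 2) * (∑ y, margY π y) := this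
      _ = G := by
          rw [show ∑ y, margY π y = 1 from by
            simpa only [margY] using hsumYX]
          rw [mul_one, hGdef]
  set a : ℝ := ∑ x, margX π x * |h x| with hadef
  set b : ℝ := ∑ y, margY π y * |g y| with hbdef
  clear_value a b
  have hC : 2 * C ≤ ε * (G + H) := by
    -- C = ∑ (π - pX pY) h g
    have hD : ∑ x, ∑ y, (margX π x * margY π y) * (h x * g y) = 0 := by
      have : ∀ x, ∑ y, (margX π x * margY π y) * (h x * g y) =
          (margX π x * h x) * ∑ y, margY π y * g y := by
        intro x
        rw [Finset.mul_sum]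
        exact Finset.sum_congr rfl fun y _ => by ring
      rw [Finset.sum_congr rfl fun x _ => this x]
      simp [hg0]
    have hCsum : C = ∑ x, ∑ y, π (x, y) * (h x * g y) := by
      rw [hCdef, Fintype.sum_prod_type]
    have hCle : C ≤ ε * (a * b) := by
      rw [hadef, hbdef]
      have key : C = ∑ x, ∑ y, (π (x, y) - margX π x * margY π y) * (h x * g y) := by
        rw [hCsum]
        rw [show (∑ x, ∑ y, (π (x, y) - margX π x * margY π y) * (h x * g y)) =
            (∑ x, ∑ y, π (x, y) * (h x * g y)) -
            (∑ x, ∑ y, (margX π x * margY π y) * (h x * g y)) from ?_, hD, sub_zero]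
        rw [← Finset.sum_sub_distrib]
        refine Finset.sum_congr rfl fun x _ => ?_
        rw [← Finset.sum_sub_distrib]
        exact Finset.sum_congr rfl fun y _ => by ring
      rw [key]
      have expand : ε * ((∑ x, margX π x * |h x|) * (∑ y, margY π y * |g y|)) =
          ∑ x, ∑ y, ε * ((margX π x * margY π y) * (|h x| * |g y|)) := by
        rw [Finset.sum_mul, Finset.mul_sum]
        refine Finset.sum_congr rfl fun x _ => ?_
        rw [Finset.mul_sum, Finset.mul_sum]
        exact Finset.sum_congr rfl fun y _ => by ring
      rw [expand]
      refine Finset.sum_le_sum fun x _ => Finset.sum_le_sum fun y _ => ?_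
      calc (π (x, y) - margX π x * margY π y) * (h x * g y)
          ≤ |(π (x, y) - margX π x * margY π y) * (h x * g y)| := le_abs_self _
        _ = |π (x, y) - margX π x * margY π y| * (|h x| * |g y|) := by
            rw [abs_mul, abs_mul]
        _ ≤ (ε * (margX π x * margY π y)) * (|h x| * |g y|) := by
            apply mul_le_mul_of_nonneg_right (hpprod x y)
            exact mul_nonneg (abs_nonneg _) (abs_nonneg _)
        _ = ε * ((margX π x * margY π y) * (|h x| * |g y|)) := by ring
    have hab : a * b ≤ (G + H) / 2 := by
      nlinarith [sq_nonneg (a - b), habsh, habsg]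
    have h1 : ε * (a * b) ≤ ε * ((G + H) / 2) := mul_le_mul_of_nonneg_left hab hε0
    linarith only [hCle, h1]
  -- Cauchy–Schwarz : (G+H)^2 ≤ E[(g+h)^2] * V
  have hCS : (G + H) ^ 2 ≤ (G + H + 2 * C) * V := by
    have := weighted_cs π (fun z => g z.2 + h z.1) F hnn
    rw [hGHS, hsq, ← hVdef] at this
    exact this
  -- S ≤ (1+ε) V
  have hSV : G + H ≤ (1 + ε) * V :=
    helper_SV (G + H) V ε C (add_nonneg hG0 hH0) hV0 hε0 hCS hC
  -- final assembly
  have hAf : (∑ y, margY π y * pvar (condX π y) (fun x => f (x, y))) = V - G := by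
    rw [← hA]
    refine Finset.sum_congr rfl fun y _ => ?_
    congr 1
    exact (pvar_sub_const (condX π y) (fun x => f (x, y)) m (hcond1X y)).symm
  have hBf : (∑ x, margX π x * pvar (condY π x) (fun y => f (x, y))) = V - H := by
    rw [← hB]
    refine Finset.sum_congr rfl fun x _ => ?_
    congr 1
    exact (pvar_sub_const (condY π x) (fun y => f (x, y)) m (hcond1Y x)).symm
  have hVf : pvar π f = V := by
    rw [hVdef]
    simp only [hFdef, hm, pvar, pmean]
  rw [hVf, hAf, hBf]
  have hEq : (V - G) + (V - H) = 2 * V - (G + H) := by ring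
  rw [hEq]
  exact helper_final V (G + H) ε hV0 hSV hε0 hε1

end
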